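/- Let N = 2r be even. For 1 ≤ k ≤ r−1, and also for k = r provided 4 divides N, one has ρ⁻¹ · μ₁(B_{N,2}^{(k,1)}) · ρ = B_{N,2}^{(k,2)}, where B_{N,2}^{(k,2)} := τ B_{N,2}^{(k,1)} τ⁻¹. -/

import Mathlib

open Matrix

/-- The cyclic permutation matrix ρ: ρ_{i+1,i} = 1 (1-based), ρ_{1,N} = 1. -/
def rhoM (N : ℕ) : Matrix (Fin N) (Fin N) ℤ :=
  Matrix.of fun i j => if (i : ℕ) = ((j : ℕ) + 1) % N then 1 else 0

/-- The skew-rotation τ: equal to ρ except τ_{1,N} = −1. -/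
def tauM (N : ℕ) : Matrix (Fin N) (Fin N) ℤ :=
  Matrix.of fun i j =>
    if (i : ℕ) = ((j : ℕ) + 1) % N then (if (j : ℕ) + 1 = N then -1 else 1) else 0

/-- Fomin–Zelevinsky matrix mutation at node `k`. -/
def mutB {N : ℕ} (k : Fin N) (B : Matrix (Fin N) (Fin N) ℤ) : Matrix (Fin N) (Fin N) ℤ :=
  Matrix.of fun i j =>
    if i = k ∨ j = k then -B i j
    else B i j + (|B i k| * B k j + B i k * |B k j|) / 2

/-- Node `k` is a sink of `B` if all entries of column `k` are nonnegative. -/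
def IsSink {N : ℕ} (k : Fin N) (B : Matrix (Fin N) (Fin N) ℤ) : Prop :=
  ∀ i, 0 ≤ B i k


/-- The matrix `R_N^(k)`: entry `(N−k+1, 1)` (1-based) equal to 1,
entry `(1, N−k+1)` equal to −1, all other entries 0. -/
def RM (N k : ℕ) : Matrix (Fin N) (Fin N) ℤ :=
  Matrix.of fun i j =>
    if (i : ℕ) = N - k ∧ (j : ℕ) = 0 then 1
    else if (i : ℕ) = 0 ∧ (j : ℕ) = N - k then -1 else 0

/-- The first period 2 primitive `B_{N,2}^(k,1)` with `t` terms: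
`Σ_{i=0}^{t−1} τ^{2i} R_N^(k) τ^{−2i}`. -/
noncomputable def B2p1 (N k t : ℕ) : Matrix (Fin N) (Fin N) ℤ :=
  ∑ i ∈ Finset.range t, (tauM N) ^ (2 * i) * RM N k * ((tauM N)⁻¹) ^ (2 * i)

/-- The second period 2 primitive `B_{N,2}^(k,2) := τ B_{N,2}^(k,1) τ⁻¹`. -/
noncomputable def B2p2 (N k t : ℕ) : Matrix (Fin N) (Fin N) ℤ :=
  tauM N * B2p1 N k t * (tauM N)⁻¹

/-! ### Auxiliary machinery -/

/-- Generalized signed permutation matrix. -/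
def GM (N : ℕ) (σ : Fin N → Fin N) (s : Fin N → ℤ) : Matrix (Fin N) (Fin N) ℤ :=
  Matrix.of fun i j => if i = σ j then s j else 0

lemma GM_mul {N : ℕ} (σ σ' : Fin N → Fin N) (s s' : Fin N → ℤ) :
    GM N σ s * GM N σ' s' = GM N (σ ∘ σ') (fun j => s (σ' j) * s' j) := by
  ext i j
  rw [Matrix.mul_apply]
  simp only [GM, Matrix.of_apply]
  rw [Finset.sum_eq_single (σ' j)]
  · simp [Function.comp]
  · intro p _ hp; simp [hp]
  · simp

lemma GM_transpose_mul {N : ℕ} (σ : Fin N → Fin N) (s : Fin N → ℤ)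
    (hσ : Function.Injective σ) (hs : ∀ j, s j * s j = 1) :
    (GM N σ s)ᵀ * GM N σ s = 1 := by
  ext i j
  rw [Matrix.mul_apply]
  simp only [GM, Matrix.transpose_apply, Matrix.of_apply]
  rw [Finset.sum_eq_single (σ j)]
  · by_cases h : i = j
    · subst h; simp [hs, Matrix.one_apply]
    · have h2 : ¬ (σ j = σ i) := fun hh => h (hσ hh).symm
      simp [h2, Matrix.one_apply, Ne.symm h, h]
  · intro p _ hp; simp [hp]
  · simp

lemma mod2 {a N : ℕ} (h : a < 2*N) : a % N = if N ≤ a then a - N else a := by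
  split
  · rw [Nat.mod_eq_sub_mod ‹_›, Nat.mod_eq_of_lt (by omega)]
  · exact Nat.mod_eq_of_lt (by omega)

def sig {N : ℕ} (hN : 0 < N) (m : ℕ) : Fin N → Fin N :=
  fun j => ⟨((j : ℕ) + m) % N, Nat.mod_lt _ hN⟩

def sgn (N m : ℕ) : Fin N → ℤ := fun j => if N ≤ (j : ℕ) + m then -1 else 1

lemma sig_injective {N : ℕ} (hN : 0 < N) (m : ℕ) : Function.Injective (sig hN m) := by
  intro a b hab
  have h : ((a : ℕ) + m) % N = ((b : ℕ) + m) % N := congrArg Fin.val hab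
  have h2 : (a : ℕ) % N = (b : ℕ) % N := Nat.ModEq.add_right_cancel' m h
  rwa [Nat.mod_eq_of_lt a.isLt, Nat.mod_eq_of_lt b.isLt, ← Fin.ext_iff] at h2

lemma sgn_sq (N m : ℕ) (j : Fin N) : sgn N m j * sgn N m j = 1 := by
  unfold sgn; split <;> norm_num

lemma tau_eq {N : ℕ} (hN : 0 < N) : tauM N = GM N (sig hN 1) (sgn N 1) := by
  ext i j
  simp only [tauM, GM, sig, sgn, Matrix.of_apply, Fin.ext_iff]
  have hj := j.isLt
  by_cases h : (j : ℕ) + 1 = N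
  · simp [h, Nat.le_of_eq h.symm]
  · have : (j:ℕ) + 1 < N := by omega
    simp [Nat.mod_eq_of_lt this]; omega

lemma rho_eq {N : ℕ} (hN : 0 < N) : rhoM N = GM N (sig hN 1) (fun _ => 1) := by
  ext i j
  simp only [rhoM, GM, sig, Matrix.of_apply, Fin.ext_iff]

lemma tau_pow {N : ℕ} (hN : 0 < N) (m : ℕ) (hm : m ≤ N) :
    (tauM N) ^ m = GM N (sig hN m) (sgn N m) := by
  induction m with
  | zero =>
    ext i j
    simp only [pow_zero, GM, sig, sgn, Matrix.of_apply, Matrix.one_apply, Fin.ext_iff]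
    have hj := j.isLt
    simp [Nat.mod_eq_of_lt hj]
    omega
  | succ m ih =>
    rw [pow_succ, ih (by omega), tau_eq hN, GM_mul]
    have hσ : (sig hN m ∘ sig hN 1) = sig hN (m+1) := by
      funext j
      simp only [Function.comp, sig, Fin.ext_iff]
      rw [Nat.mod_add_mod]
      ring_nf
    have hs : (fun j => sgn N m (sig hN 1 j) * sgn N 1 j) = sgn N (m+1) := by
      funext j
      have hj := j.isLt
      simp only [sgn, sig]
      by_cases h : (j : ℕ) + 1 = N
      · have e : ((j:ℕ) + 1) % N = 0 := by rw [h]; exact Nat.mod_self N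
        simp only [e]
        simp [show ¬ (N ≤ m) from by omega, show N ≤ (j:ℕ)+1 from by omega,
          show N ≤ (j:ℕ) + (m+1) from by omega]
      · have e : ((j:ℕ) + 1) % N = (j:ℕ) + 1 := Nat.mod_eq_of_lt (by omega)
        have h3 : ¬ (N ≤ (j:ℕ) + 1) := by omega
        simp only [e, if_neg h3, mul_one]
        split_ifs <;> omega
    rw [hσ, hs]

lemma tau_tr_mul {N : ℕ} (hN : 0 < N) : (tauM N)ᵀ * tauM N = 1 := by
  rw [tau_eq hN]
  exact GM_transpose_mul _ _ (sig_injective hN 1) (sgn_sq N 1)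

lemma tau_mul_tr {N : ℕ} (hN : 0 < N) : tauM N * (tauM N)ᵀ = 1 :=
  mul_eq_one_comm.mp (tau_tr_mul hN)

lemma tau_inv {N : ℕ} (hN : 0 < N) : (tauM N)⁻¹ = (tauM N)ᵀ :=
  Matrix.inv_eq_left_inv (tau_tr_mul hN)

lemma rho_tr_mul {N : ℕ} (hN : 0 < N) : (rhoM N)ᵀ * rhoM N = 1 := by
  rw [rho_eq hN]
  exact GM_transpose_mul _ _ (sig_injective hN 1) (fun j => by norm_num)

lemma rho_inv {N : ℕ} (hN : 0 < N) : (rhoM N)⁻¹ = (rhoM N)ᵀ :=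
  Matrix.inv_eq_left_inv (rho_tr_mul hN)

lemma tau_pow_N {N : ℕ} (hN : 0 < N) : (tauM N) ^ N = -1 := by
  rw [tau_pow hN N le_rfl]
  ext i j
  have hj := j.isLt
  simp only [GM, sig, sgn, Matrix.of_apply, Matrix.neg_apply, Matrix.one_apply, Fin.ext_iff]
  have e : ((j:ℕ) + N) % N = (j:ℕ) := by
    rw [Nat.add_mod_right]; exact Nat.mod_eq_of_lt hj
  simp only [e, if_pos (show N ≤ (j:ℕ) + N from by omega)]
  split <;> simp [*]

/-- elementary matrix -/
def EM (N : ℕ) (u v : Fin N) : Matrix (Fin N) (Fin N) ℤ :=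
  Matrix.of fun i j => if i = u ∧ j = v then 1 else 0

lemma RM_eq {N k : ℕ} (hN : 0 < N) (hk1 : 1 ≤ k) (hkN : k < N) :
    RM N k = EM N ⟨N - k, by omega⟩ ⟨0, hN⟩ - EM N ⟨0, hN⟩ ⟨N - k, by omega⟩ := by
  ext i j
  simp only [RM, EM, Matrix.sub_apply, Matrix.of_apply, Fin.ext_iff]
  have hNk : N - k ≠ 0 := by omega
  by_cases h1 : (i:ℕ) = N - k ∧ (j:ℕ) = 0
  · simp [h1.1, h1.2, hNk, Ne.symm hNk]
  · by_cases h2 : (i:ℕ) = 0 ∧ (j:ℕ) = N - k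
    · simp [h2.1, h2.2, hNk, Ne.symm hNk]
    · simp only [if_neg h1, if_neg h2]
      ring

lemma conj_EM {N : ℕ} (P Q : Matrix (Fin N) (Fin N) ℤ) (u v : Fin N) :
    P * EM N u v * Qᵀ = Matrix.of fun a b => P a u * Q b v := by
  ext a b
  rw [Matrix.mul_assoc, Matrix.mul_apply]
  have inner : ∀ p, (EM N u v * Qᵀ) p b = if p = u then Q b v else 0 := by
    intro p
    rw [Matrix.mul_apply]
    simp only [EM, Matrix.of_apply, Matrix.transpose_apply, ite_and]
    rw [Finset.sum_eq_single v]
    · split <;> simp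
    · intro q _ hq; simp [hq]
    · simp
  simp_rw [inner, mul_ite, mul_zero]
  rw [Finset.sum_eq_single u]
  · simp
  · intro p _ hp; simp [hp]
  · simp

/-- conjugation of `RM` by powers of τ, explicit entries. -/
lemma conj_RM {N k : ℕ} (hN : 0 < N) (hk1 : 1 ≤ k) (hkN : k < N) (m : ℕ) (hm : m ≤ N) :
    (tauM N) ^ m * RM N k * ((tauM N)⁻¹) ^ m =
      Matrix.of fun a b =>
        (GM N (sig hN m) (sgn N m)) a ⟨N - k, by omega⟩ * (GM N (sig hN m) (sgn N m)) b ⟨0, hN⟩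
        - (GM N (sig hN m) (sgn N m)) a ⟨0, hN⟩ * (GM N (sig hN m) (sgn N m)) b ⟨N - k, by omega⟩ := by
  rw [tau_inv hN, ← Matrix.transpose_pow, tau_pow hN m hm, RM_eq hN hk1 hkN]
  rw [mul_sub, sub_mul, conj_EM, conj_EM]
  ext a b
  simp

lemma sink_col {N k t : ℕ} (hN : 0 < N) (hk1 : 1 ≤ k) (hkN : k < N) (ht : 2 * t ≤ N) :
    ∀ a, 0 ≤ (B2p1 N k t) a ⟨0, hN⟩ := by
  intro a
  unfold B2p1
  rw [Matrix.sum_apply]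
  apply Finset.sum_nonneg
  intro i hi
  have hit : i < t := Finset.mem_range.mp hi
  have h2i : 2 * i ≤ N := by omega
  rw [conj_RM hN hk1 hkN (2*i) h2i]
  simp only [Matrix.of_apply, GM, sig, sgn, Fin.ext_iff]
  have e1 : (0 + 2*i) % N = 2*i % N := by ring_nf
  -- second factor of first term: condition 0 = (0 + 2i) % N
  by_cases hz : 2*i = 0
  · -- i = 0 : first term is [a = N-k] * 1, second term has condition 0 = (N-k)%N, false
    have hi0 : i = 0 := by omega
    subst hi0
    have e2 : (N - k) % N = N - k := Nat.mod_eq_of_lt (by omega)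
    simp only [Nat.mul_zero, Nat.add_zero, Nat.zero_add, Nat.zero_mod, e2]
    simp [show ¬ N ≤ N - k from by omega, show ¬ ((0:ℕ) = N - k) from by omega,
      show N ≠ 0 from by omega, show ¬ N ≤ 0 from by omega]
    split <;> norm_num
  · -- i ≥ 1
    have hlt : 2*i < N := by omega
    have e4 : (0 + 2*i) % N = 2*i := by
      rw [Nat.zero_add]; exact Nat.mod_eq_of_lt hlt
    have hc1 : ¬ ((0:ℕ) = 2*i) := by omega
    by_cases hk2 : 2*i = k
    · have e5 : (N - k + 2*i) % N = 0 := by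
        rw [hk2, show N - k + k = N from by omega]; exact Nat.mod_self N
      simp only [e4, e5]
      simp [show ¬ (N ≤ 0 + 2*i) from by omega, show N ≤ N - k + 2*i from by omega, hc1]
      split <;> simp [show ¬ N ≤ 2*i from by omega]
    · have e5 : (N - k + 2*i) % N ≠ 0 := by
        rw [mod2 (by omega)]; split <;> omega
      simp [Nat.mod_eq_of_lt hlt, e4, e5, hc1, Ne.symm e5]

lemma RM_transpose {N k : ℕ} (hk1 : 1 ≤ k) (hkN : k < N) : (RM N k)ᵀ = -(RM N k) := by
  have h : N - k ≠ 0 := by omega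
  ext i j
  simp only [RM, Matrix.transpose_apply, Matrix.neg_apply, Matrix.of_apply]
  split_ifs <;> omega

lemma B2p1_skew {N k t : ℕ} (hN : 0 < N) (hk1 : 1 ≤ k) (hkN : k < N) :
    (B2p1 N k t)ᵀ = -(B2p1 N k t) := by
  unfold B2p1
  rw [Matrix.transpose_sum, ← Finset.sum_neg_distrib]
  apply Finset.sum_congr rfl
  intro i _
  rw [tau_inv hN, ← Matrix.transpose_pow]
  rw [Matrix.transpose_mul, Matrix.transpose_mul, Matrix.transpose_transpose,
    RM_transpose hk1 hkN]
  simp only [Matrix.mul_neg, Matrix.neg_mul, Matrix.mul_assoc]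

/-- diagonal sign flip at node 0 -/
def DM {N : ℕ} (hN : 0 < N) : Matrix (Fin N) (Fin N) ℤ :=
  Matrix.diagonal (fun i : Fin N => if i = ⟨0, hN⟩ then (-1 : ℤ) else 1)

lemma mut_eq {N : ℕ} (hN : 0 < N) (B : Matrix (Fin N) (Fin N) ℤ)
    (hskew : Bᵀ = -B) (hsink : ∀ i, 0 ≤ B i ⟨0, hN⟩) :
    mutB ⟨0, hN⟩ B = DM hN * B * DM hN := by
  have hB0 : ∀ j, B ⟨0, hN⟩ j = -B j ⟨0, hN⟩ := by
    intro j
    have := congrFun (congrFun hskew j) ⟨0, hN⟩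
    simpa [Matrix.transpose_apply] using this
  ext i j
  simp only [DM]
  rw [Matrix.mul_diagonal, Matrix.diagonal_mul]
  simp only [mutB, Matrix.of_apply]
  by_cases hi : i = ⟨0, hN⟩ <;> by_cases hj : j = ⟨0, hN⟩
  · subst hi; subst hj
    have h0 : B ⟨0, hN⟩ ⟨0, hN⟩ = 0 := by have := hB0 ⟨0, hN⟩; omega
    simp [h0]
  · subst hi; simp [hj]
  · subst hj; simp [hi]
  · have hcond : ¬ (i = ⟨0, hN⟩ ∨ j = ⟨0, hN⟩) := by tauto
    rw [if_neg hcond]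
    simp only [if_neg hi, if_neg hj, one_mul, mul_one]
    have h1 : |B i ⟨0, hN⟩| = B i ⟨0, hN⟩ := abs_of_nonneg (hsink i)
    have h2 : |B ⟨0, hN⟩ j| = -(B ⟨0, hN⟩ j) := by
      apply abs_of_nonpos; rw [hB0 j]; have := hsink j; omega
    have h3 : |B i ⟨0, hN⟩| * B ⟨0, hN⟩ j + B i ⟨0, hN⟩ * |B ⟨0, hN⟩ j| = 0 := by
      rw [h1, h2]; ring
    rw [h3]
    simp

lemma DM_rho {N : ℕ} (hN : 0 < N) : DM hN * rhoM N = tauM N := by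
  ext i j
  simp only [DM]
  rw [Matrix.diagonal_mul]
  simp only [rhoM, tauM, Matrix.of_apply]
  have hj := j.isLt
  by_cases hij : (i : ℕ) = ((j : ℕ) + 1) % N
  · rw [if_pos hij, if_pos hij]
    by_cases h : (j : ℕ) + 1 = N
    · have hi0 : i = ⟨0, hN⟩ := by
        apply Fin.ext; rw [hij, h, Nat.mod_self]
      simp [hi0, h]
    · have : ((j : ℕ) + 1) % N = (j : ℕ) + 1 := Nat.mod_eq_of_lt (by omega)
      have hi0 : ¬ (i = ⟨0, hN⟩) := by
        intro hh; rw [hh] at hij; simp [this] at hij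
      simp [hi0, h]
  · rw [if_neg hij, if_neg hij, mul_zero]

lemma rhoT_DM {N : ℕ} (hN : 0 < N) : (rhoM N)ᵀ * DM hN = (tauM N)ᵀ := by
  have h := congrArg Matrix.transpose (DM_rho hN)
  rw [Matrix.transpose_mul] at h
  rwa [show (DM hN)ᵀ = DM hN from Matrix.diagonal_transpose _] at h

lemma step_conj {N k : ℕ} (m : ℕ) :
    tauM N * ((tauM N) ^ m * RM N k * ((tauM N)ᵀ) ^ m) * (tauM N)ᵀ
      = (tauM N) ^ (m + 1) * RM N k * ((tauM N)ᵀ) ^ (m + 1) := by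
  rw [pow_succ' (tauM N) m, pow_succ ((tauM N)ᵀ) m]
  simp only [Matrix.mul_assoc]

lemma shift_inv {N k t : ℕ} (hN : 0 < N)
    (hper : (tauM N) ^ (2 * t) * RM N k * ((tauM N)⁻¹) ^ (2 * t) = RM N k) :
    tauM N * (tauM N * B2p1 N k t * (tauM N)ᵀ) * (tauM N)ᵀ = B2p1 N k t := by
  rw [tau_inv hN] at hper
  unfold B2p1
  simp only [tau_inv hN]
  rw [Finset.mul_sum, Finset.sum_mul, Finset.mul_sum, Finset.sum_mul]
  have hterm : ∀ i ∈ Finset.range t,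
      tauM N * (tauM N * ((tauM N) ^ (2*i) * RM N k * ((tauM N)ᵀ) ^ (2*i)) * (tauM N)ᵀ) * (tauM N)ᵀ
        = (tauM N) ^ (2*(i+1)) * RM N k * ((tauM N)ᵀ) ^ (2*(i+1)) := by
    intro i _
    rw [step_conj, step_conj, show 2*i+1+1 = 2*(i+1) from by ring]
  rw [Finset.sum_congr rfl hterm]
  -- ∑_{i<t} f (i+1) = ∑_{i<t} f i
  have key : ∑ i ∈ Finset.range t,
      (tauM N) ^ (2*(i+1)) * RM N k * ((tauM N)ᵀ) ^ (2*(i+1))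
      = ∑ i ∈ Finset.range t, (tauM N) ^ (2*i) * RM N k * ((tauM N)ᵀ) ^ (2*i) := by
    have h1 := Finset.sum_range_succ'
      (fun i => (tauM N) ^ (2*i) * RM N k * ((tauM N)ᵀ) ^ (2*i)) t
    have h2 := Finset.sum_range_succ
      (fun i => (tauM N) ^ (2*i) * RM N k * ((tauM N)ᵀ) ^ (2*i)) t
    rw [h2] at h1
    have hf0 : (tauM N) ^ (2*0) * RM N k * ((tauM N)ᵀ) ^ (2*0) = RM N k := by
      norm_num
    have hft : (tauM N) ^ (2*t) * RM N k * ((tauM N)ᵀ) ^ (2*t) = RM N k := hper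
    simp only [hf0, hft] at h1
    -- h1 : ∑ f i + R = ∑ f (i+1) + R
    exact (add_right_cancel h1).symm
  exact key

lemma key_lemma {N k t : ℕ} (hN : 0 < N) (hk1 : 1 ≤ k) (hkN : k < N) (ht : 2 * t ≤ N)
    (hper : (tauM N) ^ (2 * t) * RM N k * ((tauM N)⁻¹) ^ (2 * t) = RM N k) :
    (rhoM N)⁻¹ * mutB ⟨0, hN⟩ (B2p1 N k t) * rhoM N = B2p2 N k t := by
  rw [mut_eq hN _ (B2p1_skew hN hk1 hkN) (sink_col hN hk1 hkN ht), rho_inv hN]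
  have e1 : (rhoM N)ᵀ * (DM hN * B2p1 N k t * DM hN) * rhoM N
      = ((rhoM N)ᵀ * DM hN) * B2p1 N k t * (DM hN * rhoM N) := by
    simp only [Matrix.mul_assoc]
  rw [e1, rhoT_DM hN, DM_rho hN]
  -- goal : τᵀ * B * τ = B2p2 = τ * B * τ⁻¹
  unfold B2p2
  rw [tau_inv hN]
  have hshift := shift_inv hN hper
  have htr := tau_tr_mul hN
  calc (tauM N)ᵀ * B2p1 N k t * tauM N
      = (tauM N)ᵀ * (tauM N * (tauM N * B2p1 N k t * (tauM N)ᵀ) * (tauM N)ᵀ) * tauM N := by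
        rw [hshift]
    _ = ((tauM N)ᵀ * tauM N) * (tauM N * B2p1 N k t * (tauM N)ᵀ) * ((tauM N)ᵀ * tauM N) := by
        simp only [Matrix.mul_assoc]
    _ = tauM N * B2p1 N k t * (tauM N)ᵀ := by rw [htr]; simp

/-- `ρ⁻¹ · μ₁(B_{N,2}^(k,1)) · ρ = B_{N,2}^(k,2)` for `1 ≤ k ≤ r−1`,
and also for `k = r` when `4 ∣ N` (here `N = 2r`). -/
theorem stmt3 (N r : ℕ) (hr : 1 ≤ r) (hN : N = 2 * r) :
    (∀ k, 1 ≤ k → k ≤ r - 1 →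
      (rhoM N)⁻¹ * mutB ⟨0, by omega⟩ (B2p1 N k r) * rhoM N = B2p2 N k r) ∧
    (4 ∣ N →
      (rhoM N)⁻¹ * mutB ⟨0, by omega⟩ (B2p1 N r (r / 2)) * rhoM N = B2p2 N r (r / 2)) := by
  have hN0 : 0 < N := by omega
  constructor
  · intro k hk1 hk2
    have hkN : k < N := by omega
    have ht : 2 * r ≤ N := by omega
    have hper : (tauM N) ^ (2 * r) * RM N k * ((tauM N)⁻¹) ^ (2 * r) = RM N k := by
      have h1 : (tauM N) ^ (2 * r) = -1 := by
        rw [show 2 * r = N from by omega]; exact tau_pow_N hN0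
      have h2 : ((tauM N)⁻¹) ^ (2 * r) = -1 := by
        rw [tau_inv hN0, ← Matrix.transpose_pow, h1]
        simp
      rw [h1, h2]
      simp
    exact key_lemma hN0 hk1 hkN ht hper
  · intro h4
    obtain ⟨s, hs⟩ : 2 ∣ r := by omega
    have htdiv : r / 2 = s := by omega
    have hkN : r < N := by omega
    have ht : 2 * (r / 2) ≤ N := by omega
    have hper : (tauM N) ^ (2 * (r/2)) * RM N r * ((tauM N)⁻¹) ^ (2 * (r/2)) = RM N r := by
      have h2r : 2 * (r / 2) = r := by omega
      rw [h2r, conj_RM hN0 hr hkN r (by omega)]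
      ext a b
      simp only [Matrix.of_apply, GM, sig, sgn, RM, Fin.ext_iff]
      have eNr : N - r = r := by omega
      have e1 : (N - r + r) % N = 0 := by rw [show N - r + r = N from by omega]; exact Nat.mod_self N
      have e2 : (0 + r) % N = r := by rw [Nat.zero_add]; exact Nat.mod_eq_of_lt (by omega)
      simp only [e1, e2]
      simp only [eNr]
      have s1 : N ≤ r + r := by omega
      have s2 : ¬ (N ≤ 0 + r) := by omega
      simp only [if_pos s1, if_neg s2]
      by_cases ha0 : (a : ℕ) = 0 <;> by_cases hbr : (b : ℕ) = r <;>
        by_cases har : (a : ℕ) = r <;> by_cases hb0 : (b : ℕ) = 0 <;>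
        simp [ha0, hbr, har, hb0] <;> omega
    exact key_lemma hN0 hr hkN ht hper
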